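/- Let n ≥ 2, D ≥ 1, p ∈ [0,1], q = 1 − p, let a ≥ 1 be an integer, and let α ∈ ℕ^n satisfy α_1+⋯+α_n = D + a and α_i ≥ a for all i; set m = m_{n−1}(a−n+1). Then for the random set G of the graded model M(n,D,p), the probability of the non-Scarf witness event y_α equals ((1 − q^m)^n − (m·p·q^{m−1})^n) · q^{m_n(a−n)}. -/

import Mathlib

open Finset Filter

/-- The set `Ω_D` of exponent vectors of degree `D` in `n` variables. -/
def degSet (n D : ℕ) : Finset (Fin n → ℕ) := Finset.Nat.antidiagonalTuple n D

/-- Probability of the event `E` under the graded model `M(n,D,p)`. -/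
noncomputable def grmPr (n D : ℕ) (p : ℝ) (E : Set (Finset (Fin n → ℕ))) : ℝ :=
  ∑ G ∈ (degSet n D).powerset,
    Set.indicator E (fun _ => 1) G * (p ^ G.card * (1 - p) ^ ((degSet n D).card - G.card))

/-- `m_n(d) = C(d+n-1, n-1)` for `d ≥ 0`, and `0` for `d < 0`. -/
def mfun (n : ℕ) (d : ℤ) : ℕ := if 0 ≤ d then (d.toNat + n - 1).choose (n - 1) else 0

/-- The non-Scarf witness event `y_α`: every "facet" `{β : β i = α i, β j < α j ∀ j ≠ i}`
contains an element of `G`, at least one of them contains two distinct elements of `G`,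
and `G` contains no `β` with `β j < α j` for all `j`. -/
def yEvent {n : ℕ} (α : Fin n → ℕ) (G : Finset (Fin n → ℕ)) : Prop :=
  (∀ i, ∃ β ∈ G, β i = α i ∧ ∀ j, j ≠ i → β j < α j) ∧
  (∃ i, ∃ β ∈ G, ∃ γ ∈ G, β ≠ γ ∧
    (β i = α i ∧ ∀ j, j ≠ i → β j < α j) ∧ (γ i = α i ∧ ∀ j, j ≠ i → γ j < α j)) ∧
  ¬ ∃ β ∈ G, ∀ j, β j < α j

section Auxiliary

variable {κ : Type*} [DecidableEq κ]

private lemma aux_sum_powerset_union {s t : Finset κ} (hst : Disjoint s t) (f : Finset κ → ℝ) :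
    ∑ G ∈ (s ∪ t).powerset, f G = ∑ A ∈ s.powerset, ∑ B ∈ t.powerset, f (A ∪ B) := by
  rw [← Finset.sum_product']
  refine Finset.sum_nbij' (fun G => (G ∩ s, G ∩ t)) (fun x => x.1 ∪ x.2) ?_ ?_ ?_ ?_ ?_
  · intro G hG
    simp only [Finset.mem_product, Finset.mem_powerset]
    exact ⟨Finset.inter_subset_right, Finset.inter_subset_right⟩
  · intro x hx
    simp only [Finset.mem_product, Finset.mem_powerset] at hx
    exact Finset.mem_powerset.2 (Finset.union_subset_union hx.1 hx.2)
  · intro G hG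
    simp only [Finset.mem_powerset] at hG
    simp only [← Finset.inter_union_distrib_left]
    exact Finset.inter_eq_left.2 hG
  · intro x hx
    simp only [Finset.mem_product, Finset.mem_powerset] at hx
    have h1 : (x.1 ∪ x.2) ∩ s = x.1 := by
      ext b
      simp only [Finset.mem_inter, Finset.mem_union]
      constructor
      · rintro ⟨hb1 | hb2, hbs⟩
        · exact hb1
        · exact absurd hbs (Finset.disjoint_left.1 hst.symm (hx.2 hb2))
      · exact fun hb => ⟨Or.inl hb, hx.1 hb⟩
    have h2 : (x.1 ∪ x.2) ∩ t = x.2 := by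
      ext b
      simp only [Finset.mem_inter, Finset.mem_union]
      constructor
      · rintro ⟨hb1 | hb2, hbt⟩
        · exact absurd hbt (Finset.disjoint_left.1 hst (hx.1 hb1))
        · exact hb2
      · exact fun hb => ⟨Or.inr hb, hx.2 hb⟩
    ext <;> simp [h1, h2]
  · intro G hG
    simp only [Finset.mem_powerset] at hG
    congr 1
    rw [← Finset.inter_union_distrib_left]
    exact (Finset.inter_eq_left.2 hG).symm

private lemma aux_sum_powerset_biUnion (S : ℕ → Finset κ) (f : ℕ → Finset κ → ℝ) :
    ∀ k, (∀ i < k, ∀ j < k, i ≠ j → Disjoint (S i) (S j)) →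
    ∑ G ∈ ((Finset.range k).biUnion S).powerset, ∏ i ∈ Finset.range k, f i (G ∩ S i)
      = ∏ i ∈ Finset.range k, ∑ H ∈ (S i).powerset, f i H := by
  intro k
  induction k with
  | zero => simp
  | succ k ih =>
    intro hdisj
    have hdU : Disjoint (S k) ((Finset.range k).biUnion S) := by
      rw [Finset.disjoint_biUnion_right]
      intro i hi
      simp only [Finset.mem_range] at hi
      exact hdisj k (by omega) i (by omega) (by omega)
    rw [Finset.range_add_one, Finset.biUnion_insert, aux_sum_powerset_union hdU]
    have hstep : ∀ A ∈ (S k).powerset, ∀ B ∈ ((Finset.range k).biUnion S).powerset,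
        ∏ i ∈ insert k (Finset.range k), f i ((A ∪ B) ∩ S i)
          = f k A * ∏ i ∈ Finset.range k, f i (B ∩ S i) := by
      intro A hA B hB
      rw [Finset.mem_powerset] at hA hB
      rw [Finset.prod_insert Finset.notMem_range_self]
      have hAk : (A ∪ B) ∩ S k = A := by
        rw [Finset.union_inter_distrib_right, Finset.inter_eq_left.2 hA,
          Finset.disjoint_iff_inter_eq_empty.1 (Finset.disjoint_of_subset_left hB hdU.symm),
          Finset.union_empty]
      rw [hAk]
      congr 1
      refine Finset.prod_congr rfl fun i hi => ?_
      simp only [Finset.mem_range] at hi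
      have hAi : A ∩ S i = ∅ := by
        refine Finset.disjoint_iff_inter_eq_empty.1 (Finset.disjoint_of_subset_left hA ?_)
        exact hdisj k (by omega) i (by omega) (by omega)
      rw [Finset.union_inter_distrib_right, hAi, Finset.empty_union]
    calc ∑ A ∈ (S k).powerset, ∑ B ∈ ((Finset.range k).biUnion S).powerset,
          ∏ i ∈ insert k (Finset.range k), f i ((A ∪ B) ∩ S i)
        = ∑ A ∈ (S k).powerset, ∑ B ∈ ((Finset.range k).biUnion S).powerset,
          f k A * ∏ i ∈ Finset.range k, f i (B ∩ S i) := by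
          exact Finset.sum_congr rfl fun A hA => Finset.sum_congr rfl fun B hB => hstep A hA B hB
      _ = (∑ A ∈ (S k).powerset, f k A) *
          ∑ B ∈ ((Finset.range k).biUnion S).powerset, ∏ i ∈ Finset.range k, f i (B ∩ S i) := by
          rw [← Finset.sum_mul_sum]
      _ = (∑ A ∈ (S k).powerset, f k A) * ∏ i ∈ Finset.range k, ∑ H ∈ (S i).powerset, f i H := by
          rw [ih fun i hi j hj hij => hdisj i (by omega) j (by omega) hij]
      _ = ∏ i ∈ insert k (Finset.range k), ∑ H ∈ (S i).powerset, f i H := by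
          rw [Finset.prod_insert Finset.notMem_range_self]

private lemma aux_sum_wt_total (p q : ℝ) (hpq : p + q = 1) (S : Finset κ) :
    ∑ H ∈ S.powerset, p ^ H.card * q ^ (S.card - H.card) = 1 := by
  induction S using Finset.induction with
  | empty => simp
  | @insert a S ha ih =>
    rw [Finset.sum_powerset_insert ha]
    have h1 : ∀ H ∈ S.powerset, p ^ H.card * q ^ ((insert a S).card - H.card)
        = q * (p ^ H.card * q ^ (S.card - H.card)) := by
      intro H hH
      rw [Finset.mem_powerset] at hH
      have hc : H.card ≤ S.card := Finset.card_le_card hH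
      rw [Finset.card_insert_of_notMem ha]
      have h : S.card + 1 - H.card = (S.card - H.card) + 1 := by omega
      rw [h, pow_succ]
      ring
    have h2 : ∀ H ∈ S.powerset, p ^ (insert a H).card * q ^ ((insert a S).card - (insert a H).card)
        = p * (p ^ H.card * q ^ (S.card - H.card)) := by
      intro H hH
      rw [Finset.mem_powerset] at hH
      rw [Finset.card_insert_of_notMem ha, Finset.card_insert_of_notMem (fun h => ha (hH h))]
      have h : S.card + 1 - (H.card + 1) = S.card - H.card := by omega
      rw [h, pow_succ]
      ring
    rw [Finset.sum_congr rfl h1, Finset.sum_congr rfl h2, ← Finset.mul_sum, ← Finset.mul_sum, ih]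
    linarith

private lemma aux_sum_wt_empty (p q : ℝ) (S : Finset κ) :
    ∑ H ∈ S.powerset, (if H = ∅ then (1:ℝ) else 0) * (p ^ H.card * q ^ (S.card - H.card))
      = q ^ S.card := by
  rw [Finset.sum_eq_single ∅]
  · simp
  · intro H _ hne
    simp [hne]
  · intro h
    exact absurd (Finset.empty_mem_powerset S) h

private lemma aux_sum_wt_nonempty (p q : ℝ) (hpq : p + q = 1) (S : Finset κ) :
    ∑ H ∈ S.powerset, (if H.Nonempty then (1:ℝ) else 0) * (p ^ H.card * q ^ (S.card - H.card))
      = 1 - q ^ S.card := by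
  have h : ∀ H : Finset κ, (if H.Nonempty then (1:ℝ) else 0)
      = 1 - (if H = ∅ then (1:ℝ) else 0) := by
    intro H
    by_cases h : H = ∅
    · simp [h]
    · simp [h, Finset.nonempty_iff_ne_empty.2 h]
  simp_rw [h, sub_mul, one_mul]
  rw [Finset.sum_sub_distrib, aux_sum_wt_total p q hpq, aux_sum_wt_empty]

omit [DecidableEq κ] in
private lemma aux_sum_wt_card_one (p q : ℝ) (S : Finset κ) :
    ∑ H ∈ S.powerset, (if H.card = 1 then (1:ℝ) else 0) * (p ^ H.card * q ^ (S.card - H.card))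
      = S.card * (p * q ^ (S.card - 1)) := by
  simp_rw [ite_mul, one_mul, zero_mul]
  rw [← Finset.sum_filter]
  have hps : S.powerset.filter (fun H => H.card = 1) = Finset.powersetCard 1 S := by
    rw [Finset.powersetCard_eq_filter]
  rw [hps]
  rw [Finset.sum_congr rfl (fun H hH => ?_), Finset.sum_const, Finset.card_powersetCard,
    Nat.choose_one_right, nsmul_eq_mul]
  rw [(Finset.mem_powersetCard.1 hH).2, pow_one]

private lemma aux_sum_nat_sub {ι : Type*} (s : Finset ι) (f g : ι → ℕ) (h : ∀ i ∈ s, g i ≤ f i) :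
    ∑ i ∈ s, (f i - g i) = ∑ i ∈ s, f i - ∑ i ∈ s, g i := by
  have h2 : ∑ i ∈ s, (f i - g i) + ∑ i ∈ s, g i = ∑ i ∈ s, f i := by
    rw [← Finset.sum_add_distrib]
    exact Finset.sum_congr rfl fun i hi => by have := h i hi; omega
  omega

private lemma aux_main_sum (p q : ℝ) (hpq : p + q = 1) (n : ℕ) (Ω Bs : Finset κ)
    (F : Fin n → Finset κ)
    (hFsub : ∀ i, F i ⊆ Ω) (hBsub : Bs ⊆ Ω)
    (hFF : ∀ i j, i ≠ j → Disjoint (F i) (F j)) (hFB : ∀ i, Disjoint (F i) Bs)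
    (Qf : Finset κ → Prop) [DecidablePred Qf] (v : ℝ)
    (hv : ∀ i, ∑ H ∈ (F i).powerset,
      (if Qf H then (1:ℝ) else 0) * (p ^ H.card * q ^ ((F i).card - H.card)) = v) :
    ∑ G ∈ Ω.powerset, (if (∀ i, Qf (G ∩ F i)) ∧ G ∩ Bs = ∅ then (1:ℝ) else 0)
        * (p ^ G.card * q ^ (Ω.card - G.card))
      = v ^ n * q ^ Bs.card := by
  classical
  set U : Finset κ := Finset.univ.biUnion F with hU
  set R : Finset κ := Ω \ (U ∪ Bs) with hR
  set S : ℕ → Finset κ := fun i => if h : i < n then F ⟨i, h⟩ else if i = n then Bs else R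
    with hS
  set Q : ℕ → Finset κ → Prop :=
    fun i H => if i < n then Qf H else if i = n then H = ∅ else True with hQdef
  set f : ℕ → Finset κ → ℝ :=
    fun i H => (if Q i H then 1 else 0) * (p ^ H.card * q ^ ((S i).card - H.card)) with hf
  have hSF : ∀ i : Fin n, S i.val = F i := by
    intro i
    simp only [hS, dif_pos i.isLt, Fin.eta]
  have hSn : S n = Bs := by simp [hS]
  have hSn1 : S (n+1) = R := by simp only [hS]; rw [dif_neg (by omega), if_neg (by omega)]
  have hSub : ∀ i, S i ⊆ Ω := by
    intro i
    simp only [hS]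
    split
    · exact hFsub _
    · split
      · exact hBsub
      · exact Finset.sdiff_subset
  have hΩ : (Finset.range (n+2)).biUnion S = Ω := by
    ext x
    simp only [Finset.mem_biUnion, Finset.mem_range]
    constructor
    · rintro ⟨i, _, hx⟩
      exact hSub i hx
    · intro hx
      by_cases hxU : x ∈ U
      · rw [hU, Finset.mem_biUnion] at hxU
        obtain ⟨i, _, hxF⟩ := hxU
        exact ⟨i.val, by omega, (hSF i).symm ▸ hxF⟩
      · by_cases hxB : x ∈ Bs
        · exact ⟨n, by omega, hSn.symm ▸ hxB⟩
        · refine ⟨n+1, by omega, hSn1.symm ▸ ?_⟩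
          rw [hR, Finset.mem_sdiff, Finset.mem_union]
          exact ⟨hx, fun h => h.elim hxU hxB⟩
  have hdisjR : Disjoint R (U ∪ Bs) := Finset.sdiff_disjoint
  have hdisj : ∀ i < n+2, ∀ j < n+2, i ≠ j → Disjoint (S i) (S j) := by
    have key : ∀ i < n+2, ∀ j < n+2, i < j → Disjoint (S i) (S j) := by
      intro i hi j hj hij
      rcases Nat.lt_or_ge i n with hin | hin
      · have hSi : S i = F ⟨i, hin⟩ := by simp [hS, dif_pos hin]
        rcases Nat.lt_or_ge j n with hjn | hjn
        · have hSj : S j = F ⟨j, hjn⟩ := by simp [hS, dif_pos hjn]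
          rw [hSi, hSj]
          exact hFF _ _ (by simp [Fin.ext_iff]; omega)
        · rcases Nat.eq_or_lt_of_le hjn with hjeq | hjlt
          · have hSj : S j = Bs := by simp [hS, ← hjeq]
            rw [hSi, hSj]; exact hFB _
          · have hSj : S j = R := by
              simp only [hS]; rw [dif_neg (by omega), if_neg (by omega)]
            rw [hSi, hSj]
            exact (hdisjR.mono_right (le_trans (Finset.subset_biUnion_of_mem F (Finset.mem_univ _))
              Finset.subset_union_left)).symm
      · have hieq : i = n := by omega
        have hjeq : j = n + 1 := by omega
        rw [hieq, hjeq, hSn, hSn1]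
        exact (hdisjR.mono_right Finset.subset_union_right).symm
    intro i hi j hj hij
    rcases Nat.lt_or_ge i j with h | h
    · exact key i hi j hj h
    · exact (key j hj i hi (by omega)).symm
  have hsummand : ∀ G ∈ Ω.powerset,
      (if (∀ i, Qf (G ∩ F i)) ∧ G ∩ Bs = ∅ then (1:ℝ) else 0)
        * (p ^ G.card * q ^ (Ω.card - G.card))
      = ∏ i ∈ Finset.range (n+2), f i (G ∩ S i) := by
    intro G hG
    rw [Finset.mem_powerset] at hG
    have hGU : (Finset.range (n+2)).biUnion (fun i => G ∩ S i) = G := by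
      ext x
      simp only [Finset.mem_biUnion, Finset.mem_range, Finset.mem_inter]
      constructor
      · rintro ⟨i, _, hx, _⟩; exact hx
      · intro hx
        have hx2 : x ∈ (Finset.range (n+2)).biUnion S := hΩ.symm ▸ hG hx
        rw [Finset.mem_biUnion] at hx2
        obtain ⟨i, hi, hxS⟩ := hx2
        exact ⟨i, Finset.mem_range.1 hi, hx, hxS⟩
    have hGc : ∑ i ∈ Finset.range (n+2), (G ∩ S i).card = G.card := by
      rw [← Finset.card_biUnion, hGU]
      intro i hi j hj hij
      exact (hdisj i (Finset.mem_range.1 hi) j (Finset.mem_range.1 hj) hij).mono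
        Finset.inter_subset_right Finset.inter_subset_right
    have hΩc : ∑ i ∈ Finset.range (n+2), (S i).card = Ω.card := by
      rw [← Finset.card_biUnion, hΩ]
      intro i hi j hj hij
      exact hdisj i (Finset.mem_range.1 hi) j (Finset.mem_range.1 hj) hij
    have hec : ∑ i ∈ Finset.range (n+2), ((S i).card - (G ∩ S i).card) = Ω.card - G.card := by
      rw [aux_sum_nat_sub _ _ _ (fun i _ => Finset.card_le_card Finset.inter_subset_right),
        hGc, hΩc]
    have hiff : ((∀ i, Qf (G ∩ F i)) ∧ G ∩ Bs = ∅)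
        ↔ (∀ i ∈ Finset.range (n+2), Q i (G ∩ S i)) := by
      constructor
      · rintro ⟨h1, h2⟩ i hi
        simp only [hQdef]
        split
        · next hin => exact (hSF ⟨i, hin⟩ : S i = F ⟨i, hin⟩) ▸ h1 ⟨i, hin⟩
        · split
          · next hin hieq => rw [hieq, hSn]; exact h2
          · trivial
      · intro h
        constructor
        · intro i
          have h2 := h i.val (Finset.mem_range.2 (by omega))
          simp only [hQdef, if_pos i.isLt] at h2
          rwa [hSF i] at h2
        · have h2 := h n (Finset.mem_range.2 (by omega))
          simp only [hQdef, if_neg (lt_irrefl n), if_pos rfl] at h2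
          rwa [hSn] at h2
    have hind : (if (∀ i, Qf (G ∩ F i)) ∧ G ∩ Bs = ∅ then (1:ℝ) else 0)
        = ∏ i ∈ Finset.range (n+2), if Q i (G ∩ S i) then (1:ℝ) else 0 := by
      rw [Finset.prod_boole]
      exact if_congr hiff rfl rfl
    rw [hind, ← hec, ← hGc, ← Finset.prod_pow_eq_pow_sum, ← Finset.prod_pow_eq_pow_sum,
      ← Finset.prod_mul_distrib, ← Finset.prod_mul_distrib]
  rw [Finset.sum_congr rfl hsummand, ← hΩ, aux_sum_powerset_biUnion S f (n+2) hdisj]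
  rw [Finset.prod_range_succ, Finset.prod_range_succ]
  have h1 : ∀ i ∈ Finset.range n, ∑ H ∈ (S i).powerset, f i H = v := by
    intro i hi
    rw [Finset.mem_range] at hi
    have hSi : S i = F ⟨i, hi⟩ := hSF ⟨i, hi⟩
    have hQi : ∀ H, Q i H = Qf H := by intro H; simp [hQdef, if_pos hi]
    rw [hSi, ← hv ⟨i, hi⟩]
    refine Finset.sum_congr rfl fun H _ => ?_
    rw [hf]
    simp only [hSi, hQi]
  have h2 : ∑ H ∈ (S n).powerset, f n H = q ^ Bs.card := by
    have hQn : ∀ H : Finset κ, Q n H = (H = ∅) := by intro H; simp [hQdef]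
    simp only [hf, hQn, hSn]
    exact aux_sum_wt_empty p q Bs
  have h3 : ∑ H ∈ (S (n+1)).powerset, f (n+1) H = 1 := by
    have hQn : ∀ H : Finset κ, Q (n+1) H = True := by
      intro H; simp only [hQdef]; rw [if_neg (by omega), if_neg (by omega)]
    simp only [hf, hQn, if_true, one_mul, hSn1]
    exact aux_sum_wt_total p q hpq R
  rw [Finset.prod_congr rfl h1, Finset.prod_const, Finset.card_range, h2, h3, mul_one]

end Auxiliary

private lemma aux_card_adt_succ (k d : ℕ) : (Finset.Nat.antidiagonalTuple (k+1) d).card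
    = ∑ j ∈ Finset.range (d+1), (Finset.Nat.antidiagonalTuple k (d-j)).card := by
  rw [Finset.card_eq_sum_card_fiberwise (f := fun x => x 0) (t := Finset.range (d+1)) ?_]
  · refine Finset.sum_congr rfl fun j hj => ?_
    simp only [Finset.mem_range] at hj
    refine Finset.card_nbij' (fun x => Fin.tail x) (fun y => Fin.cons j y) ?_ ?_ ?_ ?_
    · intro x hx
      simp only [Finset.mem_coe, Finset.mem_filter, Finset.Nat.mem_antidiagonalTuple] at hx
      rw [Finset.mem_coe, Finset.Nat.mem_antidiagonalTuple]
      have h := Fin.sum_univ_succ x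
      rw [hx.1] at h
      show ∑ i : Fin k, x i.succ = d - j
      omega
    · intro y hy
      rw [Finset.mem_coe, Finset.Nat.mem_antidiagonalTuple] at hy
      simp only [Finset.mem_coe, Finset.mem_filter, Finset.Nat.mem_antidiagonalTuple]
      constructor
      · rw [Fin.sum_cons, hy]
        omega
      · simp
    · intro x hx
      simp only [Finset.mem_coe, Finset.mem_filter] at hx
      show Fin.cons j (Fin.tail x) = x
      rw [← hx.2]
      exact Fin.cons_self_tail x
    · intro y _
      exact Fin.tail_cons (α := fun _ : Fin (k+1) => ℕ) j y
  · intro x hx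
    rw [Finset.mem_coe, Finset.Nat.mem_antidiagonalTuple] at hx
    simp only [Finset.mem_coe, Finset.mem_range]
    have h : x 0 ≤ d := hx ▸ Finset.single_le_sum (f := x) (fun i _ => Nat.zero_le _)
      (Finset.mem_univ 0)
    omega

private lemma aux_card_adt (k d : ℕ) :
    (Finset.Nat.antidiagonalTuple (k+1) d).card = (d + k).choose k := by
  induction k generalizing d with
  | zero => simp [Finset.Nat.antidiagonalTuple_one]
  | succ k ih =>
    rw [aux_card_adt_succ]
    simp_rw [ih]
    rw [← Finset.sum_range_reflect]
    simp only [Nat.add_sub_cancel]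
    have h1 : ∀ j ∈ Finset.range (d+1), (d - (d - j) + k).choose k = (j + k).choose k := by
      intro j hj
      simp only [Finset.mem_range] at hj
      congr 2
      omega
    rw [Finset.sum_congr rfl h1]
    have h2 : ∑ j ∈ Finset.range (d+1), (j + k).choose k
        = ∑ m ∈ Finset.Icc k (d + k), m.choose k := by
      rw [← Finset.Ico_add_one_right_eq_Icc, Finset.sum_Ico_eq_sum_range]
      refine Finset.sum_congr (by congr 1; omega) fun j hj => by rw [Nat.add_comm k j]
    rw [h2, Nat.sum_Icc_choose]
    congr 1

private lemma aux_card_adt' (k d : ℕ) (hk : 1 ≤ k) :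
    (Finset.Nat.antidiagonalTuple k d).card = (d + k - 1).choose (k-1) := by
  obtain ⟨k', rfl⟩ : ∃ k', k = k' + 1 := ⟨k-1, by omega⟩
  rw [aux_card_adt]
  congr 1 <;> omega

private lemma aux_card_filter_box (k t s : ℕ) (c : Fin k → ℕ) (hc : ∀ j, s ≤ c j)
    (hsum : ∑ j, c j = t + s) :
    ((Finset.Nat.antidiagonalTuple k t).filter (fun β => ∀ j, β j ≤ c j)).card
      = (Finset.Nat.antidiagonalTuple k s).card := by
  refine Finset.card_nbij' (fun β j => c j - β j) (fun γ j => c j - γ j) ?_ ?_ ?_ ?_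
  · intro β hβ
    simp only [Finset.mem_coe, Finset.mem_filter, Finset.Nat.mem_antidiagonalTuple] at hβ
    rw [Finset.mem_coe, Finset.Nat.mem_antidiagonalTuple]
    have h : ∑ j, (c j - β j) + ∑ j, β j = ∑ j, c j := by
      rw [← Finset.sum_add_distrib]
      exact Finset.sum_congr rfl fun j _ => by have := hβ.2 j; omega
    show ∑ j, (c j - β j) = s
    omega
  · intro γ hγ
    rw [Finset.mem_coe, Finset.Nat.mem_antidiagonalTuple] at hγ
    have hγle : ∀ j, γ j ≤ c j := fun j =>
      le_trans (hγ ▸ Finset.single_le_sum (f := γ) (fun i _ => Nat.zero_le _)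
        (Finset.mem_univ j)) (hc j)
    simp only [Finset.mem_coe, Finset.mem_filter, Finset.Nat.mem_antidiagonalTuple]
    constructor
    · have h : ∑ j, (c j - γ j) + ∑ j, γ j = ∑ j, c j := by
        rw [← Finset.sum_add_distrib]
        exact Finset.sum_congr rfl fun j _ => by have := hγle j; omega
      show ∑ j, (c j - γ j) = t
      omega
    · intro j
      show c j - γ j ≤ c j
      omega
  · intro β hβ
    simp only [Finset.mem_coe, Finset.mem_filter] at hβ
    funext j
    have := hβ.2 j
    simp only
    omega
  · intro γ hγ
    rw [Finset.mem_coe, Finset.Nat.mem_antidiagonalTuple] at hγ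
    have hγle : ∀ j, γ j ≤ c j := fun j =>
      le_trans (hγ ▸ Finset.single_le_sum (f := γ) (fun i _ => Nat.zero_le _)
        (Finset.mem_univ j)) (hc j)
    funext j
    have := hγle j
    simp only
    omega

theorem prob_nonScarf_witness_event_eq
    (n D : ℕ) (hn : 2 ≤ n) (hD : 1 ≤ D) (p q : ℝ) (hp : p ∈ Set.Icc (0:ℝ) 1)
    (hq : q = 1 - p) (a : ℕ) (ha : 1 ≤ a) (α : Fin n → ℕ)
    (hsum : ∑ i, α i = D + a) (hge : ∀ i, a ≤ α i) :
    grmPr n D p {G | yEvent α G} =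
      ((1 - q ^ mfun (n - 1) ((a : ℤ) - n + 1)) ^ n -
        ((mfun (n - 1) ((a : ℤ) - n + 1) : ℝ) * p *
          q ^ (mfun (n - 1) ((a : ℤ) - n + 1) - 1)) ^ n) *
        q ^ mfun n ((a : ℤ) - n) := by
  classical
  subst hq
  obtain ⟨m, rfl⟩ : ∃ m, n = m + 1 := ⟨n - 1, by omega⟩
  have hm : 1 ≤ m := by omega
  have hpq : p + (1 - p) = 1 := by ring
  simp only [Nat.add_sub_cancel]
  push_cast
  set M : ℕ := mfun m ((a : ℤ) - (m+1) + 1) with hMdef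
  set Ω : Finset (Fin (m+1) → ℕ) := degSet (m+1) D with hΩdef
  set F : Fin (m+1) → Finset (Fin (m+1) → ℕ) :=
    fun i => Ω.filter (fun β => β i = α i ∧ ∀ j, j ≠ i → β j < α j) with hFdef
  set Bs : Finset (Fin (m+1) → ℕ) := Ω.filter (fun β => ∀ j, β j < α j) with hBdef
  have hα1 : ∀ j, 1 ≤ α j := fun j => le_trans ha (hge j)
  have hαle : ∀ i, α i ≤ D := by
    intro i
    have h := Fin.sum_univ_succAbove α i
    have h2 : (m:ℕ) * a ≤ ∑ j : Fin m, α (i.succAbove j) := by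
      calc m * a = ∑ _j : Fin m, a := by simp [Finset.sum_const, mul_comm]
      _ ≤ _ := Finset.sum_le_sum fun j _ => hge _
    have ham : a ≤ m * a := Nat.le_mul_of_pos_left a (by omega)
    omega
  have hFsub : ∀ i, F i ⊆ Ω := fun i => Finset.filter_subset _ _
  have hBsub : Bs ⊆ Ω := Finset.filter_subset _ _
  have hFF : ∀ i j, i ≠ j → Disjoint (F i) (F j) := by
    intro i j hij
    rw [Finset.disjoint_left]
    intro β hβi hβj
    rw [hFdef, Finset.mem_filter] at hβi hβj
    have h1 := hβi.2.1
    have h2 := hβj.2.2 i (Ne.symm (fun h => hij h.symm))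
    omega
  have hFB : ∀ i, Disjoint (F i) Bs := by
    intro i
    rw [Finset.disjoint_left]
    intro β hβi hβb
    rw [hFdef, Finset.mem_filter] at hβi
    rw [hBdef, Finset.mem_filter] at hβb
    have h1 := hβi.2.1
    have h2 := hβb.2 i
    omega
  -- cardinality of the facets
  have hcardF : ∀ i, (F i).card = M := by
    intro i
    have hs1 := Fin.sum_univ_succAbove α i
    have hps : ∑ j, (α (i.succAbove j) - 1) + ∑ _j : Fin m, (1:ℕ)
        = ∑ j, α (i.succAbove j) := by
      rw [← Finset.sum_add_distrib]
      exact Finset.sum_congr rfl fun j _ => by have := hα1 (i.succAbove j); omega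
    have hsc : ∑ _j : Fin m, (1:ℕ) = m := by simp
    have hbij : (F i).card
        = ((Finset.Nat.antidiagonalTuple m (D - α i)).filter
            (fun δ => ∀ j, δ j ≤ α (i.succAbove j) - 1)).card := by
      rw [hFdef]
      refine Finset.card_nbij' (fun β j => β (i.succAbove j))
        (fun δ => @Fin.insertNth m (fun _ => ℕ) i (α i) δ) ?_ ?_ ?_ ?_
      · intro β hβ
        simp only [Finset.mem_coe, hΩdef, degSet, Finset.mem_filter, Finset.Nat.mem_antidiagonalTuple] at hβ
        obtain ⟨hβs, hβi, hβlt⟩ := hβ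
        have hb := Fin.sum_univ_succAbove β i
        simp only [Finset.mem_coe, Finset.mem_filter, Finset.Nat.mem_antidiagonalTuple]
        constructor
        · show ∑ j, β (i.succAbove j) = D - α i
          have := hαle i
          omega
        · intro j
          show β (i.succAbove j) ≤ α (i.succAbove j) - 1
          have h1 := hβlt (i.succAbove j) (Fin.succAbove_ne i j)
          have h2 := hα1 (i.succAbove j)
          omega
      · intro δ hδ
        simp only [Finset.mem_coe, Finset.mem_filter, Finset.Nat.mem_antidiagonalTuple] at hδ
        obtain ⟨hδs, hδle⟩ := hδ
        simp only [Finset.mem_coe, hΩdef, degSet, Finset.mem_filter, Finset.Nat.mem_antidiagonalTuple]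
        have hins := Fin.sum_univ_succAbove (@Fin.insertNth m (fun _ => ℕ) i (α i) δ) i
        rw [Fin.insertNth_apply_same] at hins
        have hsucc : ∀ j, @Fin.insertNth m (fun _ => ℕ) i (α i) δ (i.succAbove j) = δ j :=
          fun j => @Fin.insertNth_apply_succAbove m (fun _ => ℕ) i (α i) δ j
        refine ⟨?_, @Fin.insertNth_apply_same m (fun _ => ℕ) i (α i) δ, ?_⟩
        · rw [hins, Finset.sum_congr rfl (fun j _ => hsucc j), hδs]
          have := hαle i
          omega
        · intro j hj
          obtain ⟨j', rfl⟩ := Fin.exists_succAbove_eq hj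
          rw [hsucc j']
          have h1 := hδle j'
          have h2 := hα1 (i.succAbove j')
          omega
      · intro β hβ
        simp only [Finset.mem_coe, Finset.mem_filter] at hβ
        show @Fin.insertNth m (fun _ => ℕ) i (α i) (fun j => β (i.succAbove j)) = β
        rw [← hβ.2.1]
        exact Fin.insertNth_self_removeNth i β
      · intro δ _
        funext j
        exact @Fin.insertNth_apply_succAbove m (fun _ => ℕ) i (α i) δ j
    rw [hbij]; clear hbij
    rw [hMdef]
    by_cases ham : m ≤ a
    · rw [aux_card_filter_box m (D - α i) (a - m) (fun j => α (i.succAbove j) - 1)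
        (fun j => by
          show a - m ≤ α (i.succAbove j) - 1
          have := hge (i.succAbove j); omega)
        (by
          show ∑ j, (α (i.succAbove j) - 1) = (D - α i) + (a - m)
          have := hαle i; omega),
        aux_card_adt' m (a - m) hm]
      have h0 : (0:ℤ) ≤ (a:ℤ) - (m+1) + 1 := by omega
      have ht : ((a:ℤ) - (m+1) + 1).toNat = a - m := by omega
      rw [mfun, if_pos h0, ht]
    · have hfe : (Finset.Nat.antidiagonalTuple m (D - α i)).filter
          (fun δ => ∀ j, δ j ≤ α (i.succAbove j) - 1) = ∅ := by
        rw [Finset.filter_eq_empty_iff]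
        intro δ hδ hcon
        rw [Finset.Nat.mem_antidiagonalTuple] at hδ
        have hle : ∑ j, δ j ≤ ∑ j, (α (i.succAbove j) - 1) :=
          Finset.sum_le_sum fun j _ => by have := hcon j; omega
        have := hαle i
        omega
      rw [hfe, mfun, if_neg (by omega), Finset.card_empty]
  -- cardinality of the bottom set
  have hcardB : Bs.card = mfun (m+1) ((a:ℤ) - (m+1)) := by
    have hsc : ∑ _j : Fin (m+1), (1:ℕ) = m+1 := by simp
    have hps : ∑ j, (α j - 1) + ∑ _j : Fin (m+1), (1:ℕ) = ∑ j, α j := by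
      rw [← Finset.sum_add_distrib]
      exact Finset.sum_congr rfl fun j _ => by have := hα1 j; omega
    rw [hBdef]
    by_cases han : m + 1 ≤ a
    · have hfc : Ω.filter (fun β => ∀ j, β j < α j)
          = (Finset.Nat.antidiagonalTuple (m+1) D).filter (fun β => ∀ j, β j ≤ (α j - 1)) := by
        rw [hΩdef, degSet]
        refine Finset.filter_congr fun β _ => ?_
        constructor
        · intro h j; have := h j; have := hα1 j; omega
        · intro h j; have := h j; have := hα1 j; omega
      rw [hfc, aux_card_filter_box (m+1) D (a - (m+1)) (fun j => α j - 1)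
        (fun j => by show a - (m+1) ≤ α j - 1; have := hge j; omega)
        (by show ∑ j, (α j - 1) = D + (a - (m+1)); omega),
        aux_card_adt' (m+1) (a - (m+1)) (by omega)]
      have h0 : (0:ℤ) ≤ (a:ℤ) - (m+1) := by omega
      have ht : ((a:ℤ) - (m+1)).toNat = a - (m+1) := by omega
      rw [mfun, if_pos h0, ht]
    · have hfc : Ω.filter (fun β => ∀ j, β j < α j) = ∅ := by
        rw [Finset.filter_eq_empty_iff]
        intro β hβ hcon
        rw [hΩdef, degSet, Finset.Nat.mem_antidiagonalTuple] at hβ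
        have hle : ∑ j, β j ≤ ∑ j, (α j - 1) :=
          Finset.sum_le_sum fun j _ => by have := hcon j; omega
        omega
      rw [hfc, mfun, if_neg (by omega), Finset.card_empty]
  -- event decomposition
  have hkey : ∀ G ∈ Ω.powerset,
      Set.indicator {G | yEvent α G} (fun _ => (1:ℝ)) G
          * (p ^ G.card * (1-p) ^ (Ω.card - G.card))
      = (if (∀ i, (G ∩ F i).Nonempty) ∧ G ∩ Bs = ∅ then (1:ℝ) else 0)
          * (p ^ G.card * (1-p) ^ (Ω.card - G.card))
        - (if (∀ i, (G ∩ F i).card = 1) ∧ G ∩ Bs = ∅ then (1:ℝ) else 0)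
          * (p ^ G.card * (1-p) ^ (Ω.card - G.card)) := by
    intro G hG
    rw [Finset.mem_powerset] at hG
    rw [← sub_mul]
    congr 1
    rw [Set.indicator_apply]
    have hmem : ∀ (β : Fin (m+1) → ℕ) (i : Fin (m+1)),
        β ∈ G ∩ F i ↔ β ∈ G ∧ β i = α i ∧ ∀ j, j ≠ i → β j < α j := by
      intro β i
      simp only [Finset.mem_inter, hFdef, Finset.mem_filter]
      exact ⟨fun ⟨h1, _, h3⟩ => ⟨h1, h3⟩, fun ⟨h1, h3⟩ => ⟨h1, hG h1, h3⟩⟩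
    have h1iff : (∀ i, ∃ β ∈ G, β i = α i ∧ ∀ j, j ≠ i → β j < α j)
        ↔ ∀ i, (G ∩ F i).Nonempty := by
      refine forall_congr' fun i => ?_
      constructor
      · rintro ⟨β, hβ, hc⟩
        exact ⟨β, (hmem β i).2 ⟨hβ, hc⟩⟩
      · rintro ⟨β, hβ⟩
        obtain ⟨h1, h2⟩ := (hmem β i).1 hβ
        exact ⟨β, h1, h2⟩
    have h2iff : (∃ i, ∃ β ∈ G, ∃ γ ∈ G, β ≠ γ ∧
          (β i = α i ∧ ∀ j, j ≠ i → β j < α j) ∧ (γ i = α i ∧ ∀ j, j ≠ i → γ j < α j))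
        ↔ ∃ i, 1 < (G ∩ F i).card := by
      refine exists_congr fun i => ?_
      rw [Finset.one_lt_card]
      constructor
      · rintro ⟨β, hβ, γ, hγ, hne, hcβ, hcγ⟩
        exact ⟨β, (hmem β i).2 ⟨hβ, hcβ⟩, γ, (hmem γ i).2 ⟨hγ, hcγ⟩, hne⟩
      · rintro ⟨β, hβ, γ, hγ, hne⟩
        obtain ⟨hβG, hβc⟩ := (hmem β i).1 hβ
        obtain ⟨hγG, hγc⟩ := (hmem γ i).1 hγ
        exact ⟨β, hβG, γ, hγG, hne, hβc, hγc⟩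
    have h3iff : (¬ ∃ β ∈ G, ∀ j, β j < α j) ↔ G ∩ Bs = ∅ := by
      rw [Finset.eq_empty_iff_forall_notMem]
      constructor
      · intro h β hβ
        rw [Finset.mem_inter, hBdef, Finset.mem_filter] at hβ
        exact h ⟨β, hβ.1, hβ.2.2⟩
      · rintro h ⟨β, hβG, hβc⟩
        exact h β (Finset.mem_inter.2 ⟨hβG, Finset.mem_filter.2 ⟨hG hβG, hβc⟩⟩)
    have hyiff : G ∈ {G | yEvent α G}
        ↔ ((∀ i, (G ∩ F i).Nonempty) ∧ G ∩ Bs = ∅) ∧ ¬(∀ i, (G ∩ F i).card = 1) := by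
      rw [Set.mem_setOf_eq]
      unfold yEvent
      rw [h1iff, h2iff, h3iff]
      constructor
      · rintro ⟨hA, hB, hC⟩
        refine ⟨⟨hA, hC⟩, fun hall => ?_⟩
        obtain ⟨i, hi⟩ := hB
        rw [hall i] at hi
        omega
      · rintro ⟨⟨hA, hC⟩, hB⟩
        refine ⟨hA, ?_, hC⟩
        rw [not_forall] at hB
        obtain ⟨i, hi⟩ := hB
        have := Finset.card_pos.2 (hA i)
        exact ⟨i, by omega⟩
    by_cases hA : (∀ i, (G ∩ F i).Nonempty) ∧ G ∩ Bs = ∅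
    · by_cases hB : (∀ i, (G ∩ F i).card = 1)
      · rw [if_neg (show G ∉ {G | yEvent α G} from fun h => (hyiff.1 h).2 hB),
          if_pos hA, if_pos (show (∀ i, (G ∩ F i).card = 1) ∧ G ∩ Bs = ∅ from ⟨hB, hA.2⟩)]
        norm_num
      · rw [if_pos (show G ∈ {G | yEvent α G} from hyiff.2 ⟨hA, hB⟩), if_pos hA,
          if_neg (show ¬((∀ i, (G ∩ F i).card = 1) ∧ G ∩ Bs = ∅) from fun h => hB h.1)]
        norm_num
    · have hBimp : ¬((∀ i, (G ∩ F i).card = 1) ∧ G ∩ Bs = ∅) := by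
        rintro ⟨h1, h2⟩
        exact hA ⟨fun i => Finset.card_pos.1 (by rw [h1 i]; omega), h2⟩
      rw [if_neg (show G ∉ {G | yEvent α G} from fun h => hA (hyiff.1 h).1),
        if_neg hA, if_neg hBimp]
      norm_num
  -- assemble
  unfold grmPr
  rw [← hΩdef]
  rw [Finset.sum_congr rfl hkey, Finset.sum_sub_distrib]
  have hv1 : ∀ i, ∑ H ∈ (F i).powerset,
      (if H.Nonempty then (1:ℝ) else 0) * (p ^ H.card * (1-p) ^ ((F i).card - H.card))
      = 1 - (1-p) ^ M := by
    intro i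
    rw [aux_sum_wt_nonempty p (1-p) hpq, hcardF i]
  have hv2 : ∀ i, ∑ H ∈ (F i).powerset,
      (if H.card = 1 then (1:ℝ) else 0) * (p ^ H.card * (1-p) ^ ((F i).card - H.card))
      = (M:ℝ) * p * (1-p) ^ (M - 1) := by
    intro i
    rw [aux_sum_wt_card_one p (1-p), hcardF i]
    ring
  rw [aux_main_sum p (1-p) hpq (m+1) Ω Bs F hFsub hBsub hFF hFB
    Finset.Nonempty (1 - (1-p) ^ M) hv1]
  rw [aux_main_sum p (1-p) hpq (m+1) Ω Bs F hFsub hBsub hFF hFB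
    (fun H => H.card = 1) ((M:ℝ) * p * (1-p) ^ (M - 1)) hv2]
  rw [hcardB]
  ring
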